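/- No-broadcasting theorem: let V be a finite-dimensional real vector space, K ⊆ V a nonempty compact convex set whose linear span equals V, and e : V → ℝ a linear functional with e(x) = 1 for all x ∈ K. Then there exists a linear map Φ : V → V ⊗ V such that Φ(x) = x ⊗ x for every extreme point x of K if and only if the set of extreme points of K is linearly independent (i.e., if and only if K is a simplex). -/

import Mathlib

open TensorProduct

/-- no-broadcasting theorem: there exists a linear universal
broadcasting map `Φ : V → V ⊗ V` with `Φ x = x ⊗ x` on all extreme points of `K`
if and only if the set of extreme points of `K` is linearly independent, i.e., iff
`K` is a simplex. -/
theorem no_broadcasting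
    {V : Type*} [NormedAddCommGroup V] [NormedSpace ℝ V] [FiniteDimensional ℝ V]
    (K : Set V) (hne : K.Nonempty) (hcomp : IsCompact K) (hconv : Convex ℝ K)
    (hspan : Submodule.span ℝ K = ⊤)
    (e : V →ₗ[ℝ] ℝ) (he : ∀ x ∈ K, e x = 1) :
    (∃ Φ : V →ₗ[ℝ] V ⊗[ℝ] V, ∀ x ∈ Set.extremePoints ℝ K, Φ x = x ⊗ₜ[ℝ] x) ↔
    LinearIndependent ℝ (Subtype.val : Set.extremePoints ℝ K → V) := by
  classical
  constructor
  · rintro ⟨Φ, hΦ⟩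
    rw [linearIndependent_iff']
    intro s g hsum j hj
    set ι := ↥(Set.extremePoints ℝ K) with hι
    set x : ι → V := Subtype.val with hxdef
    have hx : ∀ i : ι, Φ (x i) = x i ⊗ₜ[ℝ] x i := fun i => hΦ i i.2
    have hxK : ∀ i : ι, e (x i) = 1 := fun i =>
      he _ (extremePoints_subset i.2)
    -- key induction: multiplying coefficients by products of functional values
    have key : ∀ (F : ι → (V →ₗ[ℝ] ℝ)) (T : Finset ι),
        ∑ i ∈ s, (g i * ∏ t ∈ T, F t (x i)) • x i = 0 := by
      intro F T
      induction T using Finset.induction_on with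
      | empty => simpa using hsum
      | insert a T ha ih =>
        have h1 : ∑ i ∈ s, (g i * ∏ t ∈ T, F t (x i)) • (x i ⊗ₜ[ℝ] x i) = 0 := by
          have := congrArg Φ ih
          simpa [map_sum, map_smul, hx] using this
        have h2 := congrArg (TensorProduct.lift ((LinearMap.lsmul ℝ V).comp (F a))) h1
        rw [map_sum, map_zero] at h2
        simp only [map_smul, TensorProduct.lift.tmul, LinearMap.coe_comp,
          Function.comp_apply, LinearMap.lsmul_apply] at h2
        rw [← h2]
        refine Finset.sum_congr rfl fun i _ => ?_
        rw [Finset.prod_insert ha, smul_smul]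
        congr 1
        ring
    -- separating functionals vanishing at x i but not at x j
    have hsep : ∀ i : ι, ∃ f : V →ₗ[ℝ] ℝ, i ≠ j → (f (x i) = 0 ∧ f (x j) ≠ 0) := by
      intro i
      by_cases hij : i = j
      · exact ⟨0, fun h => absurd hij h⟩
      · have hne' : x i - x j ≠ 0 := by
          intro h
          exact hij (Subtype.ext (by rwa [sub_eq_zero] at h))
        obtain ⟨f, hf⟩ : ∃ f : Module.Dual ℝ V, f (x i - x j) ≠ 0 := by
          by_contra h
          push_neg at h
          exact hne' ((Module.forall_dual_apply_eq_zero_iff ℝ _).mp h)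
        refine ⟨f - f (x i) • e, fun _ => ⟨?_, ?_⟩⟩
        · simp [hxK i]
        · have : f (x i) ≠ f (x j) := by
            intro h
            apply hf
            rw [map_sub, h, sub_self]
          simp [hxK j]
          intro h
          exact this (by linarith [h])
    choose F hF using hsep
    have hfin := key F (s.erase j)
    have heval : ∑ i ∈ s, g i * ∏ t ∈ s.erase j, F t (x i) = 0 := by
      have := congrArg e hfin
      simpa [map_sum, map_smul, hxK, mul_one] using this
    rw [Finset.sum_eq_single_of_mem j hj (fun i hi hij => by
      rw [Finset.prod_eq_zero (Finset.mem_erase.mpr ⟨hij, hi⟩) (hF i hij).1, mul_zero])] at heval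
    have hprod : ∏ t ∈ s.erase j, F t (x j) ≠ 0 := by
      rw [Finset.prod_ne_zero_iff]
      intro t ht
      exact (hF t (Finset.mem_erase.mp ht).1).2
    exact (mul_eq_zero.mp heval).resolve_right hprod
  · intro hli
    have hli' : LinearIndependent ℝ ((↑) : (Set.extremePoints ℝ K : Set V) → V) := hli
    let b := Module.Basis.extend hli'
    refine ⟨b.constr ℝ (fun i => (i : V) ⊗ₜ[ℝ] (i : V)), ?_⟩
    intro y hy
    have hmem : y ∈ LinearIndepOn.extend (v := id) hli' (Set.subset_univ _) :=
      LinearIndepOn.subset_extend (v := id) hli' _ hy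
    have : y = b ⟨y, hmem⟩ := (Module.Basis.extend_apply_self hli' ⟨y, hmem⟩).symm
    rw [this, Module.Basis.constr_basis]
    exact congrArg₂ (fun a c : V => a ⊗ₜ[ℝ] c) this this
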